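/- Let A = [[A₁₁, A₁₂],[0, A₂₂]] ∈ ℂ^{m×m} and B = [[B₁₁, B₁₂],[0, B₂₂]] ∈ ℂ^{n×n} be block upper triangular with square diagonal blocks, let V satisfy A₁₁V − VA₂₂ = A₁₂ and W satisfy B₁₁W − WB₂₂ = B₁₂, and let C = [[C₁₁, C₁₂],[C₂₁, C₂₂]] ∈ ℂ^{m×n} be partitioned conformally. Then for every bivariate polynomial f: f{A,Bᵀ}(C) = [I;0]·f{A₁₁,B₁₁ᵀ}(C₁₁ + VC₂₁)·[I, W] + [−V;I]·f{A₂₂,B₁₁ᵀ}(C₂₁)·[I, W] + [I;0]·f{A₁₁,B₂₂ᵀ}([I, V]·C·[−W;I])·[0, I] + [−V;I]·f{A₂₂,B₂₂ᵀ}(C₂₂ − C₂₁W)·[0, I]. -/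

import Mathlib

open Matrix

/-- For a bivariate polynomial `f(x,y) = Σ_{(i,j) ∈ s} c (i,j) xⁱ yʲ`, the bivariate matrix
function `f{A,Bᵀ}(C) := Σ_{(i,j) ∈ s} c (i,j) • Aⁱ C Bʲ`. -/
noncomputable def bivApply {I J : Type*} [Fintype I] [Fintype J] [DecidableEq I] [DecidableEq J]
    (s : Finset (ℕ × ℕ)) (c : ℕ × ℕ → ℂ)
    (A : Matrix I I ℂ) (B : Matrix J J ℂ) (C : Matrix I J ℂ) : Matrix I J ℂ :=
  ∑ p ∈ s, c p • (A ^ p.1 * C * B ^ p.2)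

private lemma blockdiag_pow {a b : ℕ} (D : Matrix (Fin a) (Fin a) ℂ)
    (E : Matrix (Fin b) (Fin b) ℂ) (n : ℕ) :
    (fromBlocks D 0 0 E) ^ n = fromBlocks (D ^ n) 0 0 (E ^ n) := by
  induction n with
  | zero => simp [← fromBlocks_one]
  | succ k ih => rw [pow_succ, pow_succ, pow_succ, ih]; simp [fromBlocks_multiply]

private lemma conj_pow' {I : Type*} [Fintype I] [DecidableEq I]
    (S Si M : Matrix I I ℂ) (h1 : Si * S = 1) (h2 : S * Si = 1) (n : ℕ) :
    (S * M * Si) ^ n = S * M ^ n * Si := by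
  induction n with
  | zero => simpa using h2.symm
  | succ k ih =>
    rw [pow_succ, ih, pow_succ]
    simp only [Matrix.mul_assoc]
    rw [← Matrix.mul_assoc Si S (M * Si), h1, Matrix.one_mul]

private lemma sum_smul_fromBlocks {a b u v : ℕ} (t : Finset (ℕ × ℕ)) (c : ℕ × ℕ → ℂ)
    (f : ℕ × ℕ → Matrix (Fin a) (Fin u) ℂ) (g : ℕ × ℕ → Matrix (Fin a) (Fin v) ℂ)
    (h : ℕ × ℕ → Matrix (Fin b) (Fin u) ℂ) (k : ℕ × ℕ → Matrix (Fin b) (Fin v) ℂ) :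
    ∑ p ∈ t, c p • fromBlocks (f p) (g p) (h p) (k p) =
      fromBlocks (∑ p ∈ t, c p • f p) (∑ p ∈ t, c p • g p)
        (∑ p ∈ t, c p • h p) (∑ p ∈ t, c p • k p) := by
  ext (i | i) (j | j) <;> simp [Matrix.sum_apply]

private lemma cstar_hmul_eq {l m n : Type*} [Fintype m] (M : Matrix l m ℂ) (N : Matrix m n ℂ) :
    @HMul.hMul (Matrix l m ℂ) (Matrix m n ℂ) (Matrix l n ℂ)
      CStarMatrix.instHMulOfFintypeOfMulOfAddCommMonoid M N = M * N := rfl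

theorem bivApply_fromBlocks_splitting (p q r s : ℕ)
    (t : Finset (ℕ × ℕ)) (c : ℕ × ℕ → ℂ)
    (A₁₁ : Matrix (Fin p) (Fin p) ℂ) (A₁₂ : Matrix (Fin p) (Fin q) ℂ)
    (A₂₂ : Matrix (Fin q) (Fin q) ℂ)
    (B₁₁ : Matrix (Fin r) (Fin r) ℂ) (B₁₂ : Matrix (Fin r) (Fin s) ℂ)
    (B₂₂ : Matrix (Fin s) (Fin s) ℂ)
    (C₁₁ : Matrix (Fin p) (Fin r) ℂ) (C₁₂ : Matrix (Fin p) (Fin s) ℂ)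
    (C₂₁ : Matrix (Fin q) (Fin r) ℂ) (C₂₂ : Matrix (Fin q) (Fin s) ℂ)
    (V : Matrix (Fin p) (Fin q) ℂ) (W : Matrix (Fin r) (Fin s) ℂ)
    (hV : A₁₁ * V - V * A₂₂ = A₁₂) (hW : B₁₁ * W - W * B₂₂ = B₁₂) :
    bivApply t c (fromBlocks A₁₁ A₁₂ 0 A₂₂) (fromBlocks B₁₁ B₁₂ 0 B₂₂)
        (fromBlocks C₁₁ C₁₂ C₂₁ C₂₂) =
      (fromRows 1 0 : Matrix (Fin p ⊕ Fin q) (Fin p) ℂ) * bivApply t c A₁₁ B₁₁ (C₁₁ + V * C₂₁) * fromCols 1 W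
      + fromRows (-V) 1 * bivApply t c A₂₂ B₁₁ C₂₁ * fromCols 1 W
      + (fromRows 1 0 : Matrix (Fin p ⊕ Fin q) (Fin p) ℂ) *
          bivApply t c A₁₁ B₂₂
            ((fromCols 1 V : Matrix (Fin p) (Fin p ⊕ Fin q) ℂ) *
              fromBlocks C₁₁ C₁₂ C₂₁ C₂₂ *
              (fromRows (-W) 1 : Matrix (Fin r ⊕ Fin s) (Fin s) ℂ)) * fromCols 0 1
      + fromRows (-V) 1 * bivApply t c A₂₂ B₂₂ (C₂₂ - C₂₁ * W) * fromCols 0 1 := by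
  set S : Matrix (Fin p ⊕ Fin q) (Fin p ⊕ Fin q) ℂ := fromBlocks 1 (-V) 0 1 with hS
  set Si : Matrix (Fin p ⊕ Fin q) (Fin p ⊕ Fin q) ℂ := fromBlocks 1 V 0 1 with hSi
  set T : Matrix (Fin r ⊕ Fin s) (Fin r ⊕ Fin s) ℂ := fromBlocks 1 (-W) 0 1 with hT
  set Ti : Matrix (Fin r ⊕ Fin s) (Fin r ⊕ Fin s) ℂ := fromBlocks 1 W 0 1 with hTi
  have hSiS : Si * S = 1 := by
    simp [hS, hSi, fromBlocks_multiply, ← fromBlocks_one]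
  have hSSi : S * Si = 1 := by
    simp [hS, hSi, fromBlocks_multiply, ← fromBlocks_one]
  have hTiT : Ti * T = 1 := by
    simp [hT, hTi, fromBlocks_multiply, ← fromBlocks_one]
  have hTTi : T * Ti = 1 := by
    simp [hT, hTi, fromBlocks_multiply, ← fromBlocks_one]
  have hA : fromBlocks A₁₁ A₁₂ 0 A₂₂ = S * fromBlocks A₁₁ 0 0 A₂₂ * Si := by
    simp [hS, hSi, fromBlocks_multiply, ← hV, sub_eq_add_neg]
  have hB : fromBlocks B₁₁ B₁₂ 0 B₂₂ = T * fromBlocks B₁₁ 0 0 B₂₂ * Ti := by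
    simp [hT, hTi, fromBlocks_multiply, ← hW, sub_eq_add_neg]
  have hApow : ∀ i : ℕ, (fromBlocks A₁₁ A₁₂ 0 A₂₂) ^ i =
      S * fromBlocks (A₁₁ ^ i) 0 0 (A₂₂ ^ i) * Si := fun i => by
    rw [hA, conj_pow' _ _ _ hSiS hSSi, blockdiag_pow]
  have hBpow : ∀ j : ℕ, (fromBlocks B₁₁ B₁₂ 0 B₂₂) ^ j =
      T * fromBlocks (B₁₁ ^ j) 0 0 (B₂₂ ^ j) * Ti := fun j => by
    rw [hB, conj_pow' _ _ _ hTiT hTTi, blockdiag_pow]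
  set X : Matrix (Fin p) (Fin s) ℂ := (C₁₁ + V * C₂₁) * (-W) + (C₁₂ + V * C₂₂) with hXdef
  have hC : Si * fromBlocks C₁₁ C₁₂ C₂₁ C₂₂ * T =
      fromBlocks (C₁₁ + V * C₂₁) X C₂₁ (C₂₁ * (-W) + C₂₂) := by
    simp [hSi, hT, hXdef, fromBlocks_multiply, add_mul]
  have hX : (fromCols 1 V : Matrix (Fin p) (Fin p ⊕ Fin q) ℂ) *
      fromBlocks C₁₁ C₁₂ C₂₁ C₂₂ *
      (fromRows (-W) 1 : Matrix (Fin r ⊕ Fin s) (Fin s) ℂ) = X := by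
    rw [fromCols_mul_fromBlocks, fromCols_mul_fromRows, hXdef]
    simp [add_mul]
  have key : bivApply t c (fromBlocks A₁₁ A₁₂ 0 A₂₂) (fromBlocks B₁₁ B₁₂ 0 B₂₂)
        (fromBlocks C₁₁ C₁₂ C₂₁ C₂₂) =
      S * fromBlocks
          (bivApply t c A₁₁ B₁₁ (C₁₁ + V * C₂₁))
          (bivApply t c A₁₁ B₂₂ X)
          (bivApply t c A₂₂ B₁₁ C₂₁)
          (bivApply t c A₂₂ B₂₂ (C₂₁ * (-W) + C₂₂)) * Ti := by
    have step : bivApply t c (fromBlocks A₁₁ A₁₂ 0 A₂₂) (fromBlocks B₁₁ B₁₂ 0 B₂₂)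
          (fromBlocks C₁₁ C₁₂ C₂₁ C₂₂) =
        S * (∑ x ∈ t, c x •
            (fromBlocks (A₁₁ ^ x.1) 0 0 (A₂₂ ^ x.1) *
              fromBlocks (C₁₁ + V * C₂₁) X C₂₁ (C₂₁ * (-W) + C₂₂) *
              fromBlocks (B₁₁ ^ x.2) 0 0 (B₂₂ ^ x.2))) * Ti := by
      unfold bivApply
      rw [Matrix.mul_sum, Matrix.sum_mul]
      refine Finset.sum_congr rfl fun x hx => ?_
      rw [hApow x.1, hBpow x.2, ← hC, Matrix.mul_smul, Matrix.smul_mul]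
      congr 1
      simp only [Matrix.mul_assoc]
    rw [step]
    congr 2
    simp only [fromBlocks_multiply, Matrix.mul_zero, Matrix.zero_mul, add_zero, zero_add]
    rw [sum_smul_fromBlocks]
    rfl
  rw [key, hX]
  have e11 : C₂₁ * (-W) + C₂₂ = C₂₂ - C₂₁ * W := by rw [Matrix.mul_neg, neg_add_eq_sub]
  rw [e11]
  set F11 := bivApply t c A₁₁ B₁₁ (C₁₁ + V * C₂₁)
  set F12 := bivApply t c A₁₁ B₂₂ X
  set F21 := bivApply t c A₂₂ B₁₁ C₂₁
  set F22 := bivApply t c A₂₂ B₂₂ (C₂₂ - C₂₁ * W)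
  simp only [cstar_hmul_eq]
  simp only [hS, hTi, fromRows_mul, Matrix.one_mul, Matrix.zero_mul, Matrix.neg_mul,
    mul_fromCols, fromRows_fromCols_eq_fromBlocks, Matrix.mul_one, Matrix.mul_zero,
    fromBlocks_multiply, ← fromRows_zero, fromCols_fromRows_eq_fromBlocks, fromBlocks_add]
  rw [fromBlocks_inj]
  refine ⟨?_, ?_, ?_, ?_⟩ <;>
    simp only [Matrix.sub_mul, Matrix.add_mul, Matrix.neg_mul, Matrix.mul_one,
      Matrix.one_mul, Matrix.zero_mul, Matrix.mul_zero, add_zero, zero_add] <;>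
    abel
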